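/- Let M̄ > 0 and T ≥ 0. Suppose ρ : [0,T] → ℝ is differentiable with ρ'(t) ≤ −ρ(t)²/2 + M̄ for all t ∈ [0,T], and ρ(0) < −√(2M̄). Then T < (1/√(2M̄)) · ln( (ρ(0) − √(2M̄)) / (ρ(0) + √(2M̄)) ). -/

import Mathlib

open Set Real

/-- Finite-time blow-up for the Riccati differential inequality: if `ρ' ≤ -ρ²/2 + M̄`
on `[0,T]` and `ρ(0) < -√(2M̄)`, then
`T < (1/√(2M̄)) · log((ρ(0) - √(2M̄))/(ρ(0) + √(2M̄)))`. -/
theorem riccati_blowup (Mbar T : ℝ) (hM : 0 < Mbar) (hT : 0 ≤ T) (ρ ρ' : ℝ → ℝ)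
    (hρ : ∀ t ∈ Set.Icc (0 : ℝ) T, HasDerivWithinAt ρ (ρ' t) (Set.Icc (0 : ℝ) T) t)
    (hineq : ∀ t ∈ Set.Icc (0 : ℝ) T, ρ' t ≤ -(ρ t) ^ 2 / 2 + Mbar)
    (h0 : ρ 0 < -Real.sqrt (2 * Mbar)) :
    T < (1 / Real.sqrt (2 * Mbar)) *
      Real.log ((ρ 0 - Real.sqrt (2 * Mbar)) / (ρ 0 + Real.sqrt (2 * Mbar))) := by
  set a := Real.sqrt (2 * Mbar) with ha_def
  have ha : 0 < a := Real.sqrt_pos.mpr (by linarith)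
  have ha2 : a ^ 2 = 2 * Mbar := Real.sq_sqrt (by linarith)
  have hρc : ContinuousOn ρ (Set.Icc 0 T) := fun t ht => (hρ t ht).continuousWithinAt
  have hρ' : ∀ x ∈ Set.Ico (0 : ℝ) T, HasDerivWithinAt ρ (ρ' x) (Set.Ici x) x := fun x hx =>
    (hρ x (Set.mem_Icc_of_Ico hx)).mono_of_mem_nhdsWithin (Icc_mem_nhdsGE_of_mem hx)
  -- Step 1: barrier argument gives ρ t ≤ -a on [0,T]
  have hbar : ∀ t ∈ Set.Icc (0 : ℝ) T, ρ t ≤ -a := by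
    intro t ht
    have key : ∀ ε : ℝ, 0 < ε → ρ t ≤ -a + ε * Real.exp (a * t) := by
      intro ε hε
      have hB : ∀ x : ℝ, HasDerivAt (fun s => -a + ε * Real.exp (a * s))
          (ε * (Real.exp (a * x) * a)) x := by
        intro x
        have h1 : HasDerivAt (fun s : ℝ => a * s) a x := by
          simpa using (hasDerivAt_id x).const_mul a
        have h2 := (Real.hasDerivAt_exp (a * x)).comp x h1
        exact (h2.const_mul ε).const_add (-a)
      refine image_le_of_deriv_right_lt_deriv_boundary hρc hρ' ?_ hB ?_ ht
      · have := Real.exp_pos (a * (0 : ℝ))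
        nlinarith
      · intro x hx heq
        have hxIcc : x ∈ Set.Icc (0 : ℝ) T := Set.mem_Icc_of_Ico hx
        have hineqx := hineq x hxIcc
        have hexp := Real.exp_pos (a * x)
        rw [heq] at hineqx
        nlinarith [mul_pos (mul_pos hε hexp) (mul_pos hε hexp)]
    by_contra hcon
    push_neg at hcon
    have hexp := Real.exp_pos (a * t)
    have := key ((ρ t + a) / (2 * Real.exp (a * t))) (div_pos (by linarith) (by positivity))
    have h2 : (ρ t + a) / (2 * Real.exp (a * t)) * Real.exp (a * t) = (ρ t + a) / 2 := by
      field_simp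
    rw [h2] at this
    linarith
  -- Step 2: ρ' ≤ 0 on [0,T], hence ρ is antitone, so ρ t ≤ ρ 0 < -a
  have hρ'le : ∀ x ∈ Set.Icc (0 : ℝ) T, ρ' x ≤ 0 := by
    intro x hx
    have h1 := hineq x hx
    have h2 := hbar x hx
    nlinarith
  have hanti : AntitoneOn ρ (Set.Icc 0 T) := by
    refine antitoneOn_of_hasDerivWithinAt_nonpos (convex_Icc 0 T) hρc
      (fun x hx => ((hρ x (interior_subset hx)).mono interior_subset)) ?_
    exact fun x hx => hρ'le x (interior_subset hx)
  have hle : ∀ t ∈ Set.Icc (0 : ℝ) T, ρ t ≤ ρ 0 := by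
    intro t ht
    exact hanti (Set.left_mem_Icc.mpr hT) ht ht.1
  have hv : ∀ t ∈ Set.Icc (0 : ℝ) T, ρ t + a < 0 := fun t ht => by
    have := hle t ht; linarith
  have hu : ∀ t ∈ Set.Icc (0 : ℝ) T, ρ t - a < 0 := fun t ht => by
    have := hv t ht; linarith
  -- Step 3: the function g(t) = log(ρ t - a) - log(ρ t + a) + a t is antitone
  set g : ℝ → ℝ := fun t => Real.log (ρ t - a) - Real.log (ρ t + a) + a * t with hg_def
  have hg : ∀ x ∈ Set.Icc (0 : ℝ) T, HasDerivWithinAt g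
      ((ρ x - a)⁻¹ * ρ' x - (ρ x + a)⁻¹ * ρ' x + a) (Set.Icc 0 T) x := by
    intro x hx
    have h1 : HasDerivWithinAt (fun t => ρ t - a) (ρ' x) (Set.Icc 0 T) x :=
      (hρ x hx).sub_const a
    have h2 : HasDerivWithinAt (fun t => ρ t + a) (ρ' x) (Set.Icc 0 T) x :=
      (hρ x hx).add_const a
    have hl1 := (Real.hasDerivAt_log (ne_of_lt (hu x hx))).comp_hasDerivWithinAt x h1
    have hl2 := (Real.hasDerivAt_log (ne_of_lt (hv x hx))).comp_hasDerivWithinAt x h2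
    have h3 : HasDerivWithinAt (fun t : ℝ => a * t) a (Set.Icc 0 T) x := by
      simpa using (hasDerivWithinAt_id x (Set.Icc 0 T)).const_mul a
    exact ((hl1.sub hl2).add h3)
  have hgc : ContinuousOn g (Set.Icc 0 T) := fun x hx => (hg x hx).continuousWithinAt
  have hg'le : ∀ x ∈ Set.Icc (0 : ℝ) T,
      (ρ x - a)⁻¹ * ρ' x - (ρ x + a)⁻¹ * ρ' x + a ≤ 0 := by
    intro x hx
    have hux := hu x hx
    have hvx := hv x hx
    have huv : 0 < (ρ x - a) * (ρ x + a) := mul_pos_of_neg_of_neg hux hvx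
    have hρ'x : ρ' x ≤ -((ρ x - a) * (ρ x + a)) / 2 := by
      have := hineq x hx; nlinarith
    have heq : (ρ x - a)⁻¹ * ρ' x - (ρ x + a)⁻¹ * ρ' x + a
        = 2 * a * ρ' x / ((ρ x - a) * (ρ x + a)) + a := by
      field_simp [ne_of_lt hux, ne_of_lt hvx]
      ring
    rw [heq]
    have h2 : 2 * a * ρ' x / ((ρ x - a) * (ρ x + a)) ≤ -a := by
      rw [div_le_iff₀ huv]
      nlinarith
    linarith
  have hganti : AntitoneOn g (Set.Icc 0 T) := by
    refine antitoneOn_of_hasDerivWithinAt_nonpos (convex_Icc 0 T) hgc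
      (fun x hx => ((hg x (interior_subset hx)).mono interior_subset)) ?_
    exact fun x hx => hg'le x (interior_subset hx)
  have hgTle : g T ≤ g 0 :=
    hganti (Set.left_mem_Icc.mpr hT) (Set.right_mem_Icc.mpr hT) hT
  -- Step 4: positivity of log(ρ T - a) - log(ρ T + a)
  have hTmem : T ∈ Set.Icc (0 : ℝ) T := Set.right_mem_Icc.mpr hT
  have hpos : Real.log (ρ T + a) < Real.log (ρ T - a) := by
    have h1 : (0 : ℝ) < |ρ T + a| := abs_pos.mpr (ne_of_lt (hv T hTmem))
    have h2 : |ρ T + a| < |ρ T - a| := by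
      rw [abs_of_neg (hv T hTmem), abs_of_neg (hu T hTmem)]
      linarith
    have := Real.log_lt_log h1 h2
    rwa [Real.log_abs, Real.log_abs] at this
  -- Conclude
  have hkey : a * T < Real.log (ρ 0 - a) - Real.log (ρ 0 + a) := by
    have := hgTle
    simp only [hg_def, mul_zero, add_zero] at this
    linarith
  have hlogdiv : Real.log ((ρ 0 - a) / (ρ 0 + a)) = Real.log (ρ 0 - a) - Real.log (ρ 0 + a) :=
    Real.log_div (ne_of_lt (hu 0 (Set.left_mem_Icc.mpr hT)))
      (ne_of_lt (hv 0 (Set.left_mem_Icc.mpr hT)))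
  rw [hlogdiv]
  rw [show (1 / a) * (Real.log (ρ 0 - a) - Real.log (ρ 0 + a))
      = (Real.log (ρ 0 - a) - Real.log (ρ 0 + a)) / a by ring, lt_div_iff₀ ha]
  linarith
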